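/- Let (G, L) be a rational structure and H ≤ G a subgroup. If H is L-quasi-convex with constant k, then H is generated by the set { h ∈ H : |h| ≤ 2k+1 }; in particular every L-quasi-convex subgroup of G is finitely generated. -/

import Mathlib

open List

/-- A word over the alphabet Ã = A ∪ A⁻¹ is a `List (A × Bool)`: the letter `(a, true)`
stands for `a` and `(a, false)` for the formal inverse `a⁻¹`. A word is *reduced* if it
has no factor `a·a⁻¹` or `a⁻¹·a`. -/
def Reduced {A : Type*} (w : List (A × Bool)) : Prop :=
  w.Chain' fun p q => ¬(p.1 = q.1 ∧ q.2 = !p.2)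

variable {A : Type*} [Fintype A] {G : Type*} [Group G]

/-- Evaluation in `G` of a word over Ã, determined by the images `f a` of the letters.
This is the (inverse-respecting) monoid homomorphism μ : Ã* → G. -/
def eval (f : A → G) (w : List (A × Bool)) : G :=
  (w.map fun p => if p.2 then f p.1 else (f p.1)⁻¹).prod

/-- Word length of `g ∈ G` with respect to the generators `A`:
the least length of a word over Ã mapping onto `g`. -/
noncomputable def wlen (f : A → G) (g : G) : ℕ :=
  sInf {n | ∃ w : List (A × Bool), eval f w = g ∧ w.length = n}

/-- A rational structure: `L` is a regular language of reduced words with μ(L) = G. -/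
def RationalStructure (f : A → G) (L : Set (List (A × Bool))) : Prop :=
  Language.IsRegular (L : Language (A × Bool)) ∧ (∀ w ∈ L, Reduced w) ∧
    ∀ g : G, ∃ w ∈ L, eval f w = g

/-- `H` is L-quasi-convex with constant `k`: for every `w ∈ L` with `μ(w) ∈ H` and
every prefix `u` of `w`, there is `h ∈ H` with `|h⁻¹ μ(u)| ≤ k`. -/
def QCW (f : A → G) (L : Set (List (A × Bool))) (H : Subgroup G) (k : ℕ) : Prop :=
  ∀ w ∈ L, eval f w ∈ H → ∀ u, u <+: w → ∃ h ∈ H, wlen f (h⁻¹ * eval f u) ≤ k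

/-- The set of right cosets `H·μ(u)` where `u` ranges over prefixes of words
`w ∈ L` with `μ(w) ∈ H` (the vertex set of the Stallings graph Γ_L(H)). -/
def VL (f : A → G) (L : Set (List (A × Bool))) (H : Subgroup G) : Set (Set G) :=
  {S | ∃ w ∈ L, eval f w ∈ H ∧ ∃ u, u <+: w ∧ S = {x | ∃ h ∈ H, x = h * eval f u}}

lemma eval_append (f : A → G) (u v : List (A × Bool)) :
    eval f (u ++ v) = eval f u * eval f v := by
  simp [eval]

lemma eval_inv (f : A → G) (w : List (A × Bool)) :
    eval f (w.reverse.map fun p => (p.1, !p.2)) = (eval f w)⁻¹ := by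
  induction w with
  | nil => simp [eval]
  | cons p t ih =>
    have : eval f (p :: t) = eval f [p] * eval f t := eval_append f [p] t
    simp only [List.reverse_cons, List.map_append, eval_append, ih, this]
    cases hp : p.2 <;> simp [eval, hp]

lemma wlen_le (f : A → G) {w : List (A × Bool)} {g : G} (h : eval f w = g) :
    wlen f g ≤ w.length :=
  Nat.sInf_le ⟨w, h, rfl⟩

lemma wlen_spec (f : A → G) (hsurj : ∀ g : G, ∃ w, eval f w = g) (g : G) :
    ∃ w : List (A × Bool), eval f w = g ∧ w.length = wlen f g := by
  have hne : {n | ∃ w : List (A × Bool), eval f w = g ∧ w.length = n}.Nonempty := by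
    obtain ⟨w, hw⟩ := hsurj g
    exact ⟨w.length, w, hw, rfl⟩
  exact Nat.sInf_mem hne

lemma wlen_mul_le (f : A → G) (hsurj : ∀ g : G, ∃ w, eval f w = g) (g₁ g₂ : G) :
    wlen f (g₁ * g₂) ≤ wlen f g₁ + wlen f g₂ := by
  obtain ⟨w₁, hw₁, hl₁⟩ := wlen_spec f hsurj g₁
  obtain ⟨w₂, hw₂, hl₂⟩ := wlen_spec f hsurj g₂
  calc wlen f (g₁ * g₂) ≤ (w₁ ++ w₂).length := wlen_le f (by rw [eval_append, hw₁, hw₂])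
  _ = wlen f g₁ + wlen f g₂ := by simp [hl₁, hl₂]

lemma wlen_inv_le (f : A → G) (hsurj : ∀ g : G, ∃ w, eval f w = g) (g : G) :
    wlen f g⁻¹ ≤ wlen f g := by
  obtain ⟨w, hw, hl⟩ := wlen_spec f hsurj g
  calc wlen f g⁻¹ ≤ (w.reverse.map fun p => (p.1, !p.2)).length :=
        wlen_le f (by rw [eval_inv, hw])
  _ = wlen f g := by simp [hl]

/-- if H is L-quasi-convex with constant k then H is generated by its
elements of word length at most 2k+1; in particular H is finitely generated. -/
theorem stmt4 (f : A → G) (L : Set (List (A × Bool))) (H : Subgroup G)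
    (hL : RationalStructure f L) (k : ℕ) (hqc : QCW f L H k) :
    Subgroup.closure {g : G | g ∈ H ∧ wlen f g ≤ 2 * k + 1} = H ∧ H.FG := by
  have hsurj : ∀ g : G, ∃ w, eval f w = g := fun g => by
    obtain ⟨w, _, hw⟩ := hL.2.2 g; exact ⟨w, hw⟩
  set S : Set G := {g : G | g ∈ H ∧ wlen f g ≤ 2 * k + 1} with hS
  have hclos : Subgroup.closure S = H := by
    apply _root_.le_antisymm
    · exact (Subgroup.closure_le H).2 fun g hg => hg.1
    · intro h hh
      obtain ⟨w, hwL, hw⟩ := hL.2.2 h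
      have hwH : eval f w ∈ H := hw ▸ hh
      -- key claim
      have key : ∀ u, u <+: w → ∀ h' ∈ H, wlen f (h'⁻¹ * eval f u) ≤ k →
          h' ∈ Subgroup.closure S := by
        intro u
        induction u using List.reverseRecOn with
        | nil =>
          intro _ h' hH' hlen
          apply Subgroup.subset_closure
          refine ⟨hH', ?_⟩
          have : wlen f h'⁻¹ ≤ k := by simpa [eval] using hlen
          have h2 : wlen f h' ≤ k := le_trans (by simpa using wlen_inv_le f hsurj h'⁻¹) this
          omega
        | append_singleton u' p ih =>
          intro hpre h' hH' hlen
          have hpre' : u' <+: w := (u'.prefix_append [p]).trans hpre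
          obtain ⟨h'', hH'', hlen''⟩ := hqc w hwL hwH u' hpre'
          have ih' : h'' ∈ Subgroup.closure S := ih hpre' h'' hH'' hlen''
          have hdec : h' = h'' * ((h''⁻¹ * eval f u') * eval f [p] * (h'⁻¹ * eval f (u' ++ [p]))⁻¹) := by
            rw [eval_append]; group
          have hSmem : (h''⁻¹ * eval f u') * eval f [p] * (h'⁻¹ * eval f (u' ++ [p]))⁻¹ ∈ S := by
            constructor
            · have : (h''⁻¹ * eval f u') * eval f [p] * (h'⁻¹ * eval f (u' ++ [p]))⁻¹
                  = h''⁻¹ * h' := by rw [eval_append]; group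
              rw [this]; exact H.mul_mem (H.inv_mem hH'') hH'
            · have h1 : wlen f (eval f [p]) ≤ 1 := by
                simpa using wlen_le f (g := eval f [p]) rfl
              have h3 : wlen f (h'⁻¹ * eval f (u' ++ [p]))⁻¹ ≤ k :=
                le_trans (wlen_inv_le f hsurj _) hlen
              calc wlen f ((h''⁻¹ * eval f u') * eval f [p] * (h'⁻¹ * eval f (u' ++ [p]))⁻¹)
                  ≤ wlen f ((h''⁻¹ * eval f u') * eval f [p])
                    + wlen f (h'⁻¹ * eval f (u' ++ [p]))⁻¹ := wlen_mul_le f hsurj _ _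
                _ ≤ (wlen f (h''⁻¹ * eval f u') + wlen f (eval f [p]))
                    + wlen f (h'⁻¹ * eval f (u' ++ [p]))⁻¹ :=
                    Nat.add_le_add_right (wlen_mul_le f hsurj _ _) _
                _ ≤ (k + 1) + k := add_le_add (add_le_add hlen'' h1) h3
                _ ≤ 2 * k + 1 := by omega
          rw [hdec]
          exact mul_mem ih' (Subgroup.subset_closure hSmem)
      have : wlen f (h⁻¹ * eval f w) ≤ k := by
        have h0 : wlen f (1 : G) ≤ 0 := wlen_le (f := f) (w := []) (by simp [eval])
        rw [hw]; simpa using h0.trans (Nat.zero_le k)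
      exact key w w.prefix_refl h hh this
  refine ⟨hclos, ?_⟩
  have hfin : S.Finite := by
    have hsub : S ⊆ eval f '' {w : List (A × Bool) | w.length ≤ 2 * k + 1} := by
      intro g hg
      obtain ⟨w, hw, hl⟩ := wlen_spec f hsurj g
      exact ⟨w, by rw [Set.mem_setOf_eq, hl]; exact hg.2, hw⟩
    exact ((List.finite_length_le _ _).image _).subset hsub
  exact ⟨hfin.toFinset, by rw [Set.Finite.coe_toFinset, hclos]⟩
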